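/- The point τ* given by τ_i* = S·γ_i / (Σ_{j=1}^n γ_j) lies in the feasible set and maximizes G over it, and the maximum value equals S·log(1 + P_A·(Σ_{j=1}^n γ_j)/S). -/

import Mathlib

/-- The rate function `r(t,x) = t·log(1 + x/t)` for `t > 0`, and `r(0,x) = 0`. -/
noncomputable def rate (t x : ℝ) : ℝ := if 0 < t then t * Real.log (1 + x / t) else 0

/-- The objective `G(τ) = Σ_{i=1}^n r(τ_i, γ_i·P_A)`. -/
noncomputable def ObjG (n : ℕ) (γ : ℕ → ℝ) (PA : ℝ) (τ : ℕ → ℝ) : ℝ :=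
  ∑ i ∈ Finset.Icc 1 n, rate (τ i) (γ i * PA)

/-- The feasible set: `τ_i ≥ 0` for `1 ≤ i ≤ n` and `Σ_{i=1}^n τ_i ≤ S`. -/
def FeasibleG (n : ℕ) (S : ℝ) (τ : ℕ → ℝ) : Prop :=
  (∀ i, 1 ≤ i → i ≤ n → 0 ≤ τ i) ∧ ∑ i ∈ Finset.Icc 1 n, τ i ≤ S


lemma rate_of_pos {t : ℝ} (ht : 0 < t) (x : ℝ) : rate t x = t * Real.log (1 + x / t) := by
  simp [rate, ht]

lemma rate_zero (x : ℝ) : rate 0 x = 0 := by simp [rate]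

lemma rate_x_zero (t : ℝ) : rate t 0 = 0 := by simp [rate]

lemma rate_nonneg {t x : ℝ} (hx : 0 ≤ x) : 0 ≤ rate t x := by
  unfold rate
  split
  · rename_i ht
    exact mul_nonneg ht.le (Real.log_nonneg (by nlinarith [div_nonneg hx ht.le]))
  · exact le_refl 0

lemma rate_mono_x {t x1 x2 : ℝ} (hx1 : 0 ≤ x1) (h : x1 ≤ x2) : rate t x1 ≤ rate t x2 := by
  unfold rate
  split
  · rename_i ht
    refine mul_le_mul_of_nonneg_left (Real.log_le_log ?_ ?_) ht.le
    · nlinarith [div_nonneg hx1 ht.le]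
    · gcongr
  · exact le_refl 0

lemma rate_superadd {t1 t2 x1 x2 : ℝ} (ht1 : 0 ≤ t1) (ht2 : 0 ≤ t2)
    (hx1 : 0 ≤ x1) (hx2 : 0 ≤ x2) :
    rate t1 x1 + rate t2 x2 ≤ rate (t1 + t2) (x1 + x2) := by
  rcases ht1.eq_or_lt with h1 | h1
  · rw [← h1, rate_zero, zero_add, zero_add]
    exact rate_mono_x hx2 (by linarith)
  rcases ht2.eq_or_lt with h2 | h2
  · rw [← h2, rate_zero, add_zero, add_zero]
    exact rate_mono_x hx1 (by linarith)
  have hT : 0 < t1 + t2 := by linarith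
  set T := t1 + t2 with hTdef
  have hp : (1 + x1 / t1) ∈ Set.Ioi (0:ℝ) := by
    simp only [Set.mem_Ioi]; nlinarith [div_nonneg hx1 h1.le]
  have hq : (1 + x2 / t2) ∈ Set.Ioi (0:ℝ) := by
    simp only [Set.mem_Ioi]; nlinarith [div_nonneg hx2 h2.le]
  have key := (strictConcaveOn_log_Ioi.concaveOn).2 hp hq
    (show (0:ℝ) ≤ t1 / T by positivity) (show (0:ℝ) ≤ t2 / T by positivity)
    (show t1 / T + t2 / T = 1 by field_simp; exact hTdef.symm)
  simp only [smul_eq_mul] at key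
  have harg : t1 / T * (1 + x1 / t1) + t2 / T * (1 + x2 / t2) = 1 + (x1 + x2) / T := by
    field_simp
    ring
  rw [harg] at key
  rw [rate_of_pos h1, rate_of_pos h2, rate_of_pos hT]
  calc t1 * Real.log (1 + x1 / t1) + t2 * Real.log (1 + x2 / t2)
      = T * (t1 / T * Real.log (1 + x1 / t1) + t2 / T * Real.log (1 + x2 / t2)) := by
        field_simp
    _ ≤ T * Real.log (1 + (x1 + x2) / T) := mul_le_mul_of_nonneg_left key hT.le

lemma rate_sum_le (s : Finset ℕ) (τ x : ℕ → ℝ)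
    (hτ : ∀ i ∈ s, 0 ≤ τ i) (hx : ∀ i ∈ s, 0 ≤ x i) :
    ∑ i ∈ s, rate (τ i) (x i) ≤ rate (∑ i ∈ s, τ i) (∑ i ∈ s, x i) := by
  induction s using Finset.cons_induction with
  | empty => simp [rate]
  | cons a s ha ih =>
    simp only [Finset.sum_cons]
    have h1 := ih (fun i hi => hτ i (Finset.mem_cons_of_mem hi))
      (fun i hi => hx i (Finset.mem_cons_of_mem hi))
    have h2 := rate_superadd (hτ a (Finset.mem_cons_self a s))
      (Finset.sum_nonneg fun i hi => hτ i (Finset.mem_cons_of_mem hi))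
      (hx a (Finset.mem_cons_self a s))
      (Finset.sum_nonneg fun i hi => hx i (Finset.mem_cons_of_mem hi))
    calc rate (τ a) (x a) + ∑ i ∈ s, rate (τ i) (x i)
        ≤ rate (τ a) (x a) + rate (∑ i ∈ s, τ i) (∑ i ∈ s, x i) := by linarith
      _ ≤ rate (τ a + ∑ i ∈ s, τ i) (x a + ∑ i ∈ s, x i) := h2

lemma rate_mono_t {t1 t2 x : ℝ} (ht1 : 0 ≤ t1) (h : t1 ≤ t2) (hx : 0 ≤ x) :
    rate t1 x ≤ rate t2 x := by
  have := rate_superadd ht1 (by linarith : (0:ℝ) ≤ t2 - t1) hx (le_refl 0)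
  rw [rate_x_zero] at this
  simpa using this

/-- The point `τ_i* = S·γ_i / (Σ_{j=1}^n γ_j)` is feasible, maximizes `G` over the
feasible set, and the maximum value equals `S·log(1 + P_A·(Σ_{j=1}^n γ_j)/S)`. -/
theorem stmt5 (n : ℕ) (hn : 1 ≤ n) (γ : ℕ → ℝ)
    (hγ : ∀ i, 1 ≤ i → i ≤ n → 0 < γ i)
    (PA S : ℝ) (hPA : 0 < PA) (hS : 0 < S) :
    FeasibleG n S (fun i => S * γ i / ∑ j ∈ Finset.Icc 1 n, γ j) ∧
    (∀ τ : ℕ → ℝ, FeasibleG n S τ →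
      ObjG n γ PA τ ≤ ObjG n γ PA (fun i => S * γ i / ∑ j ∈ Finset.Icc 1 n, γ j)) ∧
    ObjG n γ PA (fun i => S * γ i / ∑ j ∈ Finset.Icc 1 n, γ j) =
      S * Real.log (1 + PA * (∑ j ∈ Finset.Icc 1 n, γ j) / S) := by
  set Γ := ∑ j ∈ Finset.Icc 1 n, γ j with hΓdef
  have hmem : ∀ i ∈ Finset.Icc 1 n, 0 < γ i := by
    intro i hi
    rw [Finset.mem_Icc] at hi
    exact hγ i hi.1 hi.2
  have hΓ : 0 < Γ :=
    Finset.sum_pos hmem ⟨1, Finset.mem_Icc.mpr ⟨le_refl 1, hn⟩⟩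
  -- the value at τ*
  have hval : ObjG n γ PA (fun i => S * γ i / Γ) =
      S * Real.log (1 + PA * Γ / S) := by
    unfold ObjG
    have hterm : ∀ i ∈ Finset.Icc 1 n,
        rate (S * γ i / Γ) (γ i * PA) =
        S * γ i / Γ * Real.log (1 + PA * Γ / S) := by
      intro i hi
      have hγi := hmem i hi
      have hti : 0 < S * γ i / Γ := by positivity
      rw [rate_of_pos hti]
      congr 2
      field_simp
    rw [Finset.sum_congr rfl hterm, ← Finset.sum_mul, ← Finset.sum_div,
      ← Finset.mul_sum, ← hΓdef, mul_div_assoc, div_self hΓ.ne', mul_one]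
  refine ⟨⟨fun i h1 h2 => div_nonneg (mul_nonneg hS.le (hγ i h1 h2).le) hΓ.le, ?_⟩, ?_, hval⟩
  · rw [← Finset.sum_div, ← Finset.mul_sum, ← hΓdef, mul_div_assoc,
      div_self hΓ.ne', mul_one]
  · intro τ ⟨hτ0, hτS⟩
    have hτ0' : ∀ i ∈ Finset.Icc 1 n, 0 ≤ τ i := by
      intro i hi; rw [Finset.mem_Icc] at hi; exact hτ0 i hi.1 hi.2
    have hx' : ∀ i ∈ Finset.Icc 1 n, 0 ≤ γ i * PA :=
      fun i hi => mul_nonneg (hmem i hi).le hPA.le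
    have step1 : ObjG n γ PA τ ≤ rate (∑ i ∈ Finset.Icc 1 n, τ i) (Γ * PA) := by
      have := rate_sum_le (Finset.Icc 1 n) τ (fun i => γ i * PA) hτ0' hx'
      rwa [← Finset.sum_mul, ← hΓdef] at this
    have step2 : rate (∑ i ∈ Finset.Icc 1 n, τ i) (Γ * PA) ≤ rate S (Γ * PA) :=
      rate_mono_t (Finset.sum_nonneg hτ0') hτS (by positivity)
    have step3 : rate S (Γ * PA) = ObjG n γ PA (fun i => S * γ i / Γ) := by
      rw [hval, rate_of_pos hS]
      ring_nf
    linarith
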